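/- arXiv:1612.06591 — 4 statements merged into one kernel-verified Lean document; each statement's English description precedes it below -/
import Mathlib

section
/- For every l ∈ ℕ₀ and every real τ, the value V_l(τ) is a positive real number, and the function τ ↦ V_l(τ) is strictly monotonously decreasing on [0, ∞). -/
/-- V_l(z) := Γ((l+1+iz)/2)Γ((l+1−iz)/2) / (2 Γ((l+2+iz)/2)Γ((l+2−iz)/2)). -/
noncomputable def Vl (l : ℕ) (z : ℂ) : ℂ :=
  Complex.Gamma ((l + 1 + Complex.I * z) / 2) * Complex.Gamma ((l + 1 - Complex.I * z) / 2) /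
    (2 * Complex.Gamma ((l + 2 + Complex.I * z) / 2) * Complex.Gamma ((l + 2 - Complex.I * z) / 2))

namespace VlAux
open Complex Finset Filter Topology

noncomputable def g (l j : ℕ) (τ : ℝ) : ℝ :=
  (((l : ℝ) + 2 + 2 * j) ^ 2 + τ ^ 2) / (((l : ℝ) + 1 + 2 * j) ^ 2 + τ ^ 2)

lemma den_pos (l j : ℕ) (τ : ℝ) : 0 < ((l : ℝ) + 1 + 2 * j) ^ 2 + τ ^ 2 := by positivity

lemma num_pos (l j : ℕ) (τ : ℝ) : 0 < ((l : ℝ) + 2 + 2 * j) ^ 2 + τ ^ 2 := by positivity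

lemma g_pos (l j : ℕ) (τ : ℝ) : 0 < g l j τ := div_pos (num_pos l j τ) (den_pos l j τ)

lemma g_lt (l j : ℕ) {x y : ℝ} (hx : 0 ≤ x) (hxy : x < y) : g l j y < g l j x := by
  unfold g
  rw [div_lt_div_iff₀ (den_pos l j y) (den_pos l j x)]
  have h1 : x ^ 2 < y ^ 2 := by nlinarith
  have hA : (0:ℝ) ≤ (l : ℝ) := Nat.cast_nonneg l
  have hB : (0:ℝ) ≤ (j : ℝ) := Nat.cast_nonneg j
  have h2 : ((l : ℝ) + 1 + 2 * j) ^ 2 < ((l : ℝ) + 2 + 2 * j) ^ 2 := by nlinarith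
  nlinarith [mul_pos (sub_pos.2 h2) (sub_pos.2 h1)]

lemma g_le (l j : ℕ) {x y : ℝ} (hx : 0 ≤ x) (hxy : x ≤ y) : g l j y ≤ g l j x := by
  rcases eq_or_lt_of_le hxy with rfl | h
  · exact le_refl _
  · exact (g_lt l j hx h).le

noncomputable def w (l : ℕ) (τ : ℝ) : ℂ := ((l : ℂ) + 1 + I * τ) / 2
noncomputable def u (l : ℕ) (τ : ℝ) : ℂ := ((l : ℂ) + 2 + I * τ) / 2

lemma w_eq (l : ℕ) (τ : ℝ) (j : ℕ) :
    w l τ + j = ((((l : ℝ) + 1 + 2 * j) / 2 : ℝ) : ℂ) + ((τ / 2 : ℝ) : ℂ) * I := by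
  unfold w; push_cast; ring

lemma u_eq (l : ℕ) (τ : ℝ) (j : ℕ) :
    u l τ + j = ((((l : ℝ) + 2 + 2 * j) / 2 : ℝ) : ℂ) + ((τ / 2 : ℝ) : ℂ) * I := by
  unfold u; push_cast; ring

lemma normSq_w (l : ℕ) (τ : ℝ) (j : ℕ) :
    normSq (w l τ + j) = (((l : ℝ) + 1 + 2 * j) / 2) ^ 2 + (τ / 2) ^ 2 := by
  rw [w_eq]; exact normSq_add_mul_I _ _

lemma normSq_u (l : ℕ) (τ : ℝ) (j : ℕ) :
    normSq (u l τ + j) = (((l : ℝ) + 2 + 2 * j) / 2) ^ 2 + (τ / 2) ^ 2 := by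
  rw [u_eq]; exact normSq_add_mul_I _ _

lemma w_re (l : ℕ) (τ : ℝ) : (w l τ).re = ((l : ℝ) + 1) / 2 := by
  have h : w l τ = ((((l : ℝ) + 1) / 2 : ℝ) : ℂ) + ((τ / 2 : ℝ) : ℂ) * I := by
    unfold w; push_cast; ring
  rw [h]; simp

lemma u_re (l : ℕ) (τ : ℝ) : (u l τ).re = ((l : ℝ) + 2) / 2 := by
  have h : u l τ = ((((l : ℝ) + 2) / 2 : ℝ) : ℂ) + ((τ / 2 : ℝ) : ℂ) * I := by
    unfold u; push_cast; ring
  rw [h]; simp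

lemma Gamma_w_ne (l : ℕ) (τ : ℝ) : Gamma (w l τ) ≠ 0 := by
  apply Gamma_ne_zero_of_re_pos; rw [w_re]; positivity

lemma Gamma_u_ne (l : ℕ) (τ : ℝ) : Gamma (u l τ) ≠ 0 := by
  apply Gamma_ne_zero_of_re_pos; rw [u_re]; positivity

lemma conj_w (l : ℕ) (τ : ℝ) : ((l : ℂ) + 1 - I * τ) / 2 = starRingEnd ℂ (w l τ) := by
  unfold w; rw [map_div₀]; simp [Complex.conj_I, map_ofNat]; ring

lemma conj_u (l : ℕ) (τ : ℝ) : ((l : ℂ) + 2 - I * τ) / 2 = starRingEnd ℂ (u l τ) := by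
  unfold u; rw [map_div₀]; simp [Complex.conj_I, map_ofNat]; ring

lemma Vl_form (l : ℕ) (τ : ℝ) :
    Vl l τ = Gamma (w l τ) * Gamma (starRingEnd ℂ (w l τ)) /
      (2 * Gamma (u l τ) * Gamma (starRingEnd ℂ (u l τ))) := by
  rw [Vl, ← conj_w, ← conj_u]
  rfl

lemma Vl_eq (l : ℕ) (τ : ℝ) :
    Vl l τ = ((normSq (Gamma (w l τ)) / (2 * normSq (Gamma (u l τ))) : ℝ) : ℂ) := by
  rw [Vl_form, Gamma_conj, Gamma_conj, mul_conj, mul_assoc, mul_conj]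
  push_cast; ring

lemma Vl_im (l : ℕ) (τ : ℝ) : (Vl l τ).im = 0 := by rw [Vl_eq]; exact ofReal_im _

lemma Vl_re (l : ℕ) (τ : ℝ) :
    (Vl l τ).re = normSq (Gamma (w l τ)) / (2 * normSq (Gamma (u l τ))) := by
  rw [Vl_eq]; exact ofReal_re _

lemma Vl_re_pos (l : ℕ) (τ : ℝ) : 0 < (Vl l τ).re := by
  rw [Vl_re]
  exact div_pos (normSq_pos.2 (Gamma_w_ne l τ))
    (mul_pos two_pos (normSq_pos.2 (Gamma_u_ne l τ)))

lemma g_eq_normSq (l : ℕ) (τ : ℝ) (j : ℕ) :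
    g l j τ = normSq (u l τ + j) / normSq (w l τ + j) := by
  rw [normSq_u, normSq_w]; unfold g
  rw [div_eq_div_iff (den_pos l j τ).ne' (by positivity : (0:ℝ) < ((((l:ℝ)+1+2*j)/2)^2 + (τ/2)^2)).ne']
  ring

lemma conjprod (v : ℂ) (n : ℕ) :
    (∏ j ∈ range (n + 1), (v + j)) * (∏ j ∈ range (n + 1), (starRingEnd ℂ v + j)) =
      ((∏ j ∈ range (n + 1), normSq (v + j) : ℝ) : ℂ) := by
  have h1 : ∀ j ∈ range (n + 1), starRingEnd ℂ v + (j : ℂ) = starRingEnd ℂ (v + j) := by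
    intro j _; simp
  rw [Finset.prod_congr rfl h1, ← map_prod, mul_conj, map_prod]

lemma alg (P f a b nn : ℂ) (ha : a ≠ 0) (hb : b ≠ 0) (hf : f ≠ 0) (hP : P ≠ 0)
    (hn : nn ≠ 0) :
    P * f / a / (2 * (P * nn * f / b)) = b / a / (2 * nn) := by
  field_simp

lemma key (l : ℕ) (τ : ℝ) {n : ℕ} (hn : 1 ≤ n) :
    GammaSeq (w l τ) n * GammaSeq (starRingEnd ℂ (w l τ)) n /
      (2 * GammaSeq (u l τ) n * GammaSeq (starRingEnd ℂ (u l τ)) n) =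
      (((∏ j ∈ range (n + 1), g l j τ) / (2 * n) : ℝ) : ℂ) := by
  have hn0 : (n : ℂ) ≠ 0 := Nat.cast_ne_zero.2 (by omega)
  have hnR : (n : ℝ) ≠ 0 := Nat.cast_ne_zero.2 (by omega)
  have hfac : ((n.factorial : ℕ) : ℂ) ≠ 0 := Nat.cast_ne_zero.2 (Nat.factorial_ne_zero n)
  have hprodg : ∏ j ∈ range (n + 1), g l j τ =
      (∏ j ∈ range (n + 1), normSq (u l τ + j)) / ∏ j ∈ range (n + 1), normSq (w l τ + j) := by
    rw [← Finset.prod_div_distrib]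
    exact Finset.prod_congr rfl fun j _ => g_eq_normSq l τ j
  have hnw : (n : ℂ) ^ (w l τ) * (n : ℂ) ^ (starRingEnd ℂ (w l τ)) = (n : ℂ) ^ (l + 1) := by
    rw [← cpow_add _ _ hn0, Complex.add_conj, w_re,
      show ((2 * (((l : ℝ) + 1) / 2) : ℝ) : ℂ) = ((l + 1 : ℕ) : ℂ) by push_cast; ring,
      cpow_natCast]
  have hnu : (n : ℂ) ^ (u l τ) * (n : ℂ) ^ (starRingEnd ℂ (u l τ)) = (n : ℂ) ^ (l + 2) := by
    rw [← cpow_add _ _ hn0, Complex.add_conj, u_re,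
      show ((2 * (((l : ℝ) + 2) / 2) : ℝ) : ℂ) = ((l + 2 : ℕ) : ℂ) by push_cast; ring,
      cpow_natCast]
  have htop : GammaSeq (w l τ) n * GammaSeq (starRingEnd ℂ (w l τ)) n =
      (n : ℂ) ^ (l + 1) * (((n.factorial : ℕ) : ℂ) * ((n.factorial : ℕ) : ℂ)) /
        ((∏ j ∈ range (n + 1), normSq (w l τ + j) : ℝ) : ℂ) := by
    rw [GammaSeq, GammaSeq, div_mul_div_comm, conjprod, ← hnw]; ring
  have hbot : GammaSeq (u l τ) n * GammaSeq (starRingEnd ℂ (u l τ)) n =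
      (n : ℂ) ^ (l + 2) * (((n.factorial : ℕ) : ℂ) * ((n.factorial : ℕ) : ℂ)) /
        ((∏ j ∈ range (n + 1), normSq (u l τ + j) : ℝ) : ℂ) := by
    rw [GammaSeq, GammaSeq, div_mul_div_comm, conjprod, ← hnu]; ring
  rw [mul_assoc, htop, hbot, hprodg]
  set A : ℝ := ∏ j ∈ range (n + 1), normSq (w l τ + j) with hA
  set B : ℝ := ∏ j ∈ range (n + 1), normSq (u l τ + j) with hB
  have hApos : (0:ℝ) < A :=
    Finset.prod_pos fun j _ => by rw [normSq_w]; positivity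
  have hBpos : (0:ℝ) < B :=
    Finset.prod_pos fun j _ => by rw [normSq_u]; positivity
  have hA0 : ((A : ℝ) : ℂ) ≠ 0 := ofReal_ne_zero.2 hApos.ne'
  have hB0 : ((B : ℝ) : ℂ) ≠ 0 := ofReal_ne_zero.2 hBpos.ne'
  push_cast
  rw [pow_succ (n : ℂ) (l + 1)]
  exact alg ((n:ℂ) ^ (l + 1)) ((n.factorial : ℂ) * (n.factorial : ℂ)) (A : ℂ) (B : ℂ) (n : ℂ)
    hA0 hB0 (mul_ne_zero hfac hfac) (pow_ne_zero _ hn0) hn0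

lemma tendsto_seq (l : ℕ) (τ : ℝ) :
    Tendsto (fun n : ℕ => (∏ j ∈ range (n + 1), g l j τ) / (2 * (n : ℝ))) atTop
      (𝓝 ((Vl l τ).re)) := by
  have hden : 2 * Gamma (u l τ) * Gamma (starRingEnd ℂ (u l τ)) ≠ 0 := by
    apply mul_ne_zero (mul_ne_zero two_ne_zero (Gamma_u_ne l τ))
    rw [Gamma_conj]
    simpa using Gamma_u_ne l τ
  have h2 : Tendsto (fun n => GammaSeq (w l τ) n * GammaSeq (starRingEnd ℂ (w l τ)) n /
      (2 * GammaSeq (u l τ) n * GammaSeq (starRingEnd ℂ (u l τ)) n)) atTop (𝓝 (Vl l τ)) := by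
    rw [Vl_form]
    exact ((GammaSeq_tendsto_Gamma _).mul (GammaSeq_tendsto_Gamma _)).div
      ((tendsto_const_nhds.mul (GammaSeq_tendsto_Gamma _)).mul (GammaSeq_tendsto_Gamma _)) hden
  have h3 : Tendsto (fun n : ℕ =>
      (((∏ j ∈ range (n + 1), g l j τ) / (2 * (n : ℝ)) : ℝ) : ℂ)) atTop (𝓝 (Vl l τ)) := by
    apply h2.congr'
    filter_upwards [eventually_ge_atTop 1] with n hn
    exact key l τ hn
  have h4 := (Complex.continuous_re.tendsto (Vl l τ)).comp h3
  simpa only [Function.comp_def, ofReal_re] using h4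

noncomputable def s (l : ℕ) (τ : ℝ) : ℝ := (Vl l τ).re / g l 0 τ

lemma s_pos (l : ℕ) (τ : ℝ) : 0 < s l τ := div_pos (Vl_re_pos l τ) (g_pos l 0 τ)

lemma tendsto_s (l : ℕ) (τ : ℝ) :
    Tendsto (fun n : ℕ => (∏ j ∈ range n, g l (j + 1) τ) / (2 * (n : ℝ))) atTop (𝓝 (s l τ)) := by
  have h := (tendsto_seq l τ).div_const (g l 0 τ)
  apply h.congr
  intro n
  rw [Finset.prod_range_succ', div_div, mul_comm (2 * (n:ℝ)) (g l 0 τ),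
    ← div_div, mul_div_assoc, div_self (g_pos l 0 τ).ne', mul_one]

lemma s_anti (l : ℕ) {x y : ℝ} (hx : 0 ≤ x) (hxy : x ≤ y) : s l y ≤ s l x := by
  apply le_of_tendsto_of_tendsto' (tendsto_s l y) (tendsto_s l x)
  intro n
  rcases Nat.eq_zero_or_pos n with rfl | hn
  · simp
  · have h2n : (0:ℝ) < 2 * n := by positivity
    refine (div_le_div_iff_of_pos_right h2n).mpr ?_
    exact Finset.prod_le_prod (fun j _ => (g_pos l (j + 1) y).le)
      (fun j _ => g_le l (j + 1) hx hxy)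

lemma Vl_re_factor (l : ℕ) (τ : ℝ) : (Vl l τ).re = g l 0 τ * s l τ := by
  rw [s, mul_comm, div_mul_cancel₀ _ (g_pos l 0 τ).ne']

end VlAux

/-- For every l ∈ ℕ₀ and every real τ the value V_l(τ) is a positive real number, and
τ ↦ V_l(τ) is strictly monotonously decreasing on [0, ∞). -/
theorem Vl_real_pos_strictAnti (l : ℕ) :
    (∀ τ : ℝ, (Vl l (τ : ℂ)).im = 0 ∧ 0 < (Vl l (τ : ℂ)).re) ∧
    StrictAntiOn (fun τ : ℝ => (Vl l (τ : ℂ)).re) (Set.Ici 0) := by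
  refine ⟨fun τ => ⟨VlAux.Vl_im l τ, VlAux.Vl_re_pos l τ⟩, ?_⟩
  intro x hx y _ hxy
  have hx0 : (0:ℝ) ≤ x := hx
  simp only
  rw [VlAux.Vl_re_factor l x, VlAux.Vl_re_factor l y]
  calc VlAux.g l 0 y * VlAux.s l y
      < VlAux.g l 0 x * VlAux.s l y :=
        mul_lt_mul_of_pos_right (VlAux.g_lt l 0 hx0 hxy) (VlAux.s_pos l y)
    _ ≤ VlAux.g l 0 x * VlAux.s l x :=
        mul_le_mul_of_nonneg_left (VlAux.s_anti l hx0 hxy.le) (VlAux.g_pos l 0 x).le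
end

section
/- For every l ∈ ℕ₀ and every ζ ∈ [0,1), the value V_l(iζ) is a positive real number, and the function ζ ↦ V_l(iζ) is strictly monotonously increasing on [0,1). -/
open Filter Topology Finset

/-! ### Auxiliary definitions and lemmas -/

/-- The real-valued version of `Vl` along the imaginary axis. -/
noncomputable def Vreal (l : ℕ) (ζ : ℝ) : ℝ :=
  Real.Gamma (((l:ℝ)+1-ζ)/2) * Real.Gamma (((l:ℝ)+1+ζ)/2) /
    (2 * Real.Gamma (((l:ℝ)+1-ζ)/2 + 1/2) * Real.Gamma (((l:ℝ)+1+ζ)/2 + 1/2))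

/-- The elementary factors appearing in the Euler-product expansion. -/
noncomputable def Qf (a b : ℝ) (j : ℕ) : ℝ :=
  ((a + 1/2 + j) * (b + 1/2 + j)) / ((a + j) * (b + j))

lemma Qf_eq (s ζ : ℝ) (j : ℕ) :
    Qf ((s-ζ)/2) ((s+ζ)/2) j =
      ((s^2 - ζ^2)/4 + (((j:ℝ)+1/2)^2 + ((j:ℝ)+1/2)*s)) /
      ((s^2 - ζ^2)/4 + ((j:ℝ)^2 + (j:ℝ)*s)) := by
  unfold Qf; congr 1 <;> ring

lemma Qf_le (s : ℝ) (hs : 1 ≤ s) {x y : ℝ} (hx : 0 ≤ x) (hxy : x ≤ y) (hy : y < 1) (j : ℕ) :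
    Qf ((s-x)/2) ((s+x)/2) j ≤ Qf ((s-y)/2) ((s+y)/2) j := by
  rw [Qf_eq, Qf_eq]
  have hj : (0:ℝ) ≤ (j:ℝ) := j.cast_nonneg
  have hB : 0 < (s^2 - y^2)/4 := by nlinarith
  have hBA : (s^2 - y^2)/4 ≤ (s^2 - x^2)/4 := by nlinarith
  have hv : (0:ℝ) ≤ (j:ℝ)^2 + (j:ℝ)*s := by nlinarith
  have huv : (j:ℝ)^2 + (j:ℝ)*s ≤ ((j:ℝ)+1/2)^2 + ((j:ℝ)+1/2)*s := by nlinarith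
  rw [div_le_div_iff₀ (by linarith) (by linarith)]
  nlinarith

lemma Qf_lt (s : ℝ) (hs : 1 ≤ s) {x y : ℝ} (hx : 0 ≤ x) (hxy : x < y) (hy : y < 1) (j : ℕ) :
    Qf ((s-x)/2) ((s+x)/2) j < Qf ((s-y)/2) ((s+y)/2) j := by
  rw [Qf_eq, Qf_eq]
  have hj : (0:ℝ) ≤ (j:ℝ) := j.cast_nonneg
  have hB : 0 < (s^2 - y^2)/4 := by nlinarith
  have hBA : (s^2 - y^2)/4 < (s^2 - x^2)/4 := by nlinarith
  have hv : (0:ℝ) ≤ (j:ℝ)^2 + (j:ℝ)*s := by nlinarith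
  have huv : (j:ℝ)^2 + (j:ℝ)*s < ((j:ℝ)+1/2)^2 + ((j:ℝ)+1/2)*s := by nlinarith
  rw [div_lt_div_iff₀ (by linarith) (by linarith)]
  nlinarith

lemma Qf_pos {a b : ℝ} (ha : 0 < a) (hb : 0 < b) (j : ℕ) : 0 < Qf a b j := by
  unfold Qf
  have hj : (0:ℝ) ≤ (j:ℝ) := j.cast_nonneg
  positivity

/-- Euler-product expansion of the `GammaSeq` ratio. -/
lemma P_eq (a b : ℝ) (ha : 0 < a) (hb : 0 < b) {n : ℕ} (hn : 1 ≤ n) :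
    Real.GammaSeq a n * Real.GammaSeq b n /
      (2 * Real.GammaSeq (a + 1/2) n * Real.GammaSeq (b + 1/2) n) =
    (1 / (2 * n)) * ∏ j ∈ Finset.range (n + 1), Qf a b j := by
  have hN : (0:ℝ) < n := by exact_mod_cast hn
  have hfac : (0:ℝ) < (n.factorial : ℝ) := by exact_mod_cast Nat.factorial_pos n
  have pA : 0 < ∏ j ∈ Finset.range (n+1), (a + (j:ℝ)) :=
    Finset.prod_pos fun j _ => by positivity
  have pB : 0 < ∏ j ∈ Finset.range (n+1), (b + (j:ℝ)) :=
    Finset.prod_pos fun j _ => by positivity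
  have pA' : 0 < ∏ j ∈ Finset.range (n+1), (a + 1/2 + (j:ℝ)) :=
    Finset.prod_pos fun j _ => by positivity
  have pB' : 0 < ∏ j ∈ Finset.range (n+1), (b + 1/2 + (j:ℝ)) :=
    Finset.prod_pos fun j _ => by positivity
  have e1 : (n:ℝ) ^ (a + 1/2) = (n:ℝ) ^ a * (n:ℝ) ^ (1/2 : ℝ) := Real.rpow_add hN a (1/2)
  have e2 : (n:ℝ) ^ (b + 1/2) = (n:ℝ) ^ b * (n:ℝ) ^ (1/2 : ℝ) := Real.rpow_add hN b (1/2)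
  simp only [Real.GammaSeq, Qf, Finset.prod_div_distrib, Finset.prod_mul_distrib]
  rw [e1, e2]
  set w : ℝ := (n:ℝ) ^ (1/2 : ℝ) with hw
  set x : ℝ := (n:ℝ) ^ a with hx
  set y : ℝ := (n:ℝ) ^ b with hy
  have hwpos : 0 < w := by rw [hw]; positivity
  have hxpos : 0 < x := by rw [hx]; positivity
  have hypos : 0 < y := by rw [hy]; positivity
  have e3 : w * w = (n:ℝ) := by
    rw [hw, ← Real.rpow_add hN]; norm_num
  rw [← e3]
  field_simp

lemma tendsto_P (a b : ℝ) (ha : 0 < a) (hb : 0 < b) :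
    Tendsto (fun n => Real.GammaSeq a n * Real.GammaSeq b n /
      (2 * Real.GammaSeq (a+1/2) n * Real.GammaSeq (b+1/2) n)) atTop
      (𝓝 (Real.Gamma a * Real.Gamma b / (2 * Real.Gamma (a+1/2) * Real.Gamma (b+1/2)))) := by
  have d : (0:ℝ) < 2 * Real.Gamma (a+1/2) * Real.Gamma (b+1/2) := by
    have := Real.Gamma_pos_of_pos (by linarith : (0:ℝ) < a + 1/2)
    have := Real.Gamma_pos_of_pos (by linarith : (0:ℝ) < b + 1/2)
    positivity
  exact ((Real.GammaSeq_tendsto_Gamma a).mul (Real.GammaSeq_tendsto_Gamma b)).div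
    ((tendsto_const_nhds.mul (Real.GammaSeq_tendsto_Gamma (a+1/2))).mul
      (Real.GammaSeq_tendsto_Gamma (b+1/2))) d.ne'

lemma Vreal_pos (l : ℕ) {ζ : ℝ} (h0 : 0 ≤ ζ) (h1 : ζ < 1) : 0 < Vreal l ζ := by
  have hl : (1:ℝ) ≤ (l:ℝ) + 1 := by
    have := l.cast_nonneg (α := ℝ); linarith
  have g1 := Real.Gamma_pos_of_pos (show (0:ℝ) < ((l:ℝ)+1-ζ)/2 by linarith)
  have g2 := Real.Gamma_pos_of_pos (show (0:ℝ) < ((l:ℝ)+1+ζ)/2 by linarith)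
  have g3 := Real.Gamma_pos_of_pos (show (0:ℝ) < ((l:ℝ)+1-ζ)/2 + 1/2 by linarith)
  have g4 := Real.Gamma_pos_of_pos (show (0:ℝ) < ((l:ℝ)+1+ζ)/2 + 1/2 by linarith)
  unfold Vreal
  positivity

/-- Strict monotonicity of `Vreal` on `[0,1)`. -/
lemma Vreal_lt (l : ℕ) {x y : ℝ} (hx : 0 ≤ x) (hxy : x < y) (hy : y < 1) :
    Vreal l x < Vreal l y := by
  set s : ℝ := (l:ℝ) + 1 with hsdef
  have hs : 1 ≤ s := by
    have := l.cast_nonneg (α := ℝ); simp only [hsdef]; linarith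
  have hx1 : x < 1 := lt_trans hxy hy
  have ha1 : 0 < (s - x)/2 := by linarith
  have hb1 : 0 < (s + x)/2 := by linarith
  have ha2 : 0 < (s - y)/2 := by linarith
  have hb2 : 0 < (s + y)/2 := by linarith
  -- limits
  have hV1 : Vreal l x = Real.Gamma ((s-x)/2) * Real.Gamma ((s+x)/2) /
      (2 * Real.Gamma ((s-x)/2 + 1/2) * Real.Gamma ((s+x)/2 + 1/2)) := by
    unfold Vreal; rw [hsdef]
  have hV2 : Vreal l y = Real.Gamma ((s-y)/2) * Real.Gamma ((s+y)/2) /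
      (2 * Real.Gamma ((s-y)/2 + 1/2) * Real.Gamma ((s+y)/2 + 1/2)) := by
    unfold Vreal; rw [hsdef]
  have hT1 := tendsto_P ((s-x)/2) ((s+x)/2) ha1 hb1
  have hT2 := tendsto_P ((s-y)/2) ((s+y)/2) ha2 hb2
  rw [← hV1] at hT1
  rw [← hV2] at hT2
  -- the uniform ratio
  set r : ℝ := Qf ((s-y)/2) ((s+y)/2) 0 / Qf ((s-x)/2) ((s+x)/2) 0 with hrdef
  have hQ1pos : ∀ j, 0 < Qf ((s-x)/2) ((s+x)/2) j := fun j => Qf_pos ha1 hb1 j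
  have hQ2pos : ∀ j, 0 < Qf ((s-y)/2) ((s+y)/2) j := fun j => Qf_pos ha2 hb2 j
  have hr : 1 < r := by
    rw [hrdef]
    exact (one_lt_div (hQ1pos 0)).mpr (Qf_lt s hs hx hxy hy 0)
  -- eventual inequality between the sequences
  have key : ∀ n, 1 ≤ n →
      r * (Real.GammaSeq ((s-x)/2) n * Real.GammaSeq ((s+x)/2) n /
        (2 * Real.GammaSeq ((s-x)/2 + 1/2) n * Real.GammaSeq ((s+x)/2 + 1/2) n)) ≤
      Real.GammaSeq ((s-y)/2) n * Real.GammaSeq ((s+y)/2) n /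
        (2 * Real.GammaSeq ((s-y)/2 + 1/2) n * Real.GammaSeq ((s+y)/2 + 1/2) n) := by
    intro n hn
    rw [P_eq _ _ ha1 hb1 hn, P_eq _ _ ha2 hb2 hn]
    rw [mul_left_comm]
    refine mul_le_mul_of_nonneg_left ?_ (by positivity)
    -- r * ∏ Q1 ≤ ∏ Q2
    rw [Finset.prod_range_succ' (Qf ((s-x)/2) ((s+x)/2)) n,
        Finset.prod_range_succ' (Qf ((s-y)/2) ((s+y)/2)) n]
    have hT12 : ∏ j ∈ Finset.range n, Qf ((s-x)/2) ((s+x)/2) (j+1) ≤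
        ∏ j ∈ Finset.range n, Qf ((s-y)/2) ((s+y)/2) (j+1) :=
      Finset.prod_le_prod (fun j _ => (hQ1pos (j+1)).le)
        (fun j _ => Qf_le s hs hx hxy.le hy (j+1))
    have e : r * ((∏ j ∈ Finset.range n, Qf ((s-x)/2) ((s+x)/2) (j+1)) *
        Qf ((s-x)/2) ((s+x)/2) 0) =
        Qf ((s-y)/2) ((s+y)/2) 0 * ∏ j ∈ Finset.range n, Qf ((s-x)/2) ((s+x)/2) (j+1) := by
      rw [hrdef, div_mul_eq_mul_div, mul_div_assoc, mul_div_assoc,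
        div_self (hQ1pos 0).ne', mul_one]
    rw [e]
    calc Qf ((s-y)/2) ((s+y)/2) 0 * ∏ j ∈ Finset.range n, Qf ((s-x)/2) ((s+x)/2) (j+1)
        ≤ Qf ((s-y)/2) ((s+y)/2) 0 * ∏ j ∈ Finset.range n, Qf ((s-y)/2) ((s+y)/2) (j+1) :=
          mul_le_mul_of_nonneg_left hT12 (hQ2pos 0).le
      _ = (∏ j ∈ Finset.range n, Qf ((s-y)/2) ((s+y)/2) (j+1)) * Qf ((s-y)/2) ((s+y)/2) 0 := by
          ring
  have hle : r * Vreal l x ≤ Vreal l y := by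
    refine le_of_tendsto_of_tendsto (tendsto_const_nhds.mul hT1) hT2 ?_
    filter_upwards [eventually_ge_atTop 1] with n hn using key n hn
  have hpos := Vreal_pos l hx hx1
  nlinarith

lemma Vl_eq (l : ℕ) (ζ : ℝ) : Vl l (Complex.I * (ζ:ℂ)) = ((Vreal l ζ : ℝ) : ℂ) := by
  have h : Complex.I * (Complex.I * (ζ:ℂ)) = ((-ζ : ℝ) : ℂ) := by
    rw [← mul_assoc, Complex.I_mul_I]; push_cast; ring
  unfold Vl Vreal
  rw [h]
  have e1 : ((l:ℂ) + 1 + ((-ζ:ℝ):ℂ))/2 = ((((l:ℝ)+1-ζ)/2 : ℝ) : ℂ) := by push_cast; ring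
  have e2 : ((l:ℂ) + 1 - ((-ζ:ℝ):ℂ))/2 = ((((l:ℝ)+1+ζ)/2 : ℝ) : ℂ) := by push_cast; ring
  have e3 : ((l:ℂ) + 2 + ((-ζ:ℝ):ℂ))/2 = ((((l:ℝ)+1-ζ)/2 + 1/2 : ℝ) : ℂ) := by push_cast; ring
  have e4 : ((l:ℂ) + 2 - ((-ζ:ℝ):ℂ))/2 = ((((l:ℝ)+1+ζ)/2 + 1/2 : ℝ) : ℂ) := by push_cast; ring
  rw [e1, e2, e3, e4, Complex.Gamma_ofReal, Complex.Gamma_ofReal, Complex.Gamma_ofReal,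
    Complex.Gamma_ofReal]
  norm_cast

/-- For every l ∈ ℕ₀ and every ζ ∈ [0,1) the value V_l(iζ) is a positive real number, and
ζ ↦ V_l(iζ) is strictly monotonously increasing on [0,1). -/
theorem Vl_imaginary_pos_strictMono (l : ℕ) :
    (∀ ζ : ℝ, ζ ∈ Set.Ico (0 : ℝ) 1 →
      (Vl l (Complex.I * (ζ : ℂ))).im = 0 ∧ 0 < (Vl l (Complex.I * (ζ : ℂ))).re) ∧
    StrictMonoOn (fun ζ : ℝ => (Vl l (Complex.I * (ζ : ℂ))).re) (Set.Ico 0 1) := by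
  constructor
  · intro ζ hζ
    rw [Vl_eq]
    exact ⟨Complex.ofReal_im _, by rw [Complex.ofReal_re]; exact Vreal_pos l hζ.1 hζ.2⟩
  · intro x hx y hy hxy
    simp only [Vl_eq, Complex.ofReal_re]
    exact Vreal_lt l hx.1 hxy hy.2
end

section
/- For every τ ∈ ℝ one has (9 + 4τ²)·(1 + 2τ·sinh(πτ)) − (9 + (4 + 18π − 9π²/2)·τ²)·cosh(πτ) ≥ 0; equivalently, (9 + 4τ²)·(sech(πτ) + 2τ·tanh(πτ)) ≥ 9 + (4 + 18π − 9π²/2)·τ². -/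
set_option maxHeartbeats 1000000

open Real Nat

private lemma hyp_step (p : ℝ) (hp : 0 < p) (a b : ℝ) (k : ℕ)
    (h : a * p ≤ b * ((k : ℝ) + 1)) :
    a * p ^ (k + 1) / ((k + 1)! : ℝ) ≤ b * p ^ k / (k ! : ℝ) := by
  have hk : (0 : ℝ) < (k ! : ℝ) := by exact_mod_cast Nat.factorial_pos k
  have hk1 : (((k + 1)! : ℕ) : ℝ) = ((k : ℝ) + 1) * (k ! : ℝ) := by
    rw [Nat.factorial_succ]; push_cast; ring
  have hkpos : (0 : ℝ) < (k : ℝ) + 1 := by positivity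
  have hppow : (0 : ℝ) ≤ p ^ k / (((k + 1)! : ℕ) : ℝ) := by positivity
  calc a * p ^ (k + 1) / ((k + 1)! : ℝ)
      = (a * p) * (p ^ k / (((k + 1)! : ℕ) : ℝ)) := by rw [pow_succ]; ring
    _ ≤ (b * ((k : ℝ) + 1)) * (p ^ k / (((k + 1)! : ℕ) : ℝ)) :=
        mul_le_mul_of_nonneg_right h hppow
    _ = b * p ^ k / (k ! : ℝ) := by rw [hk1]; field_simp

private lemma hyp_coef (p : ℝ) (h1 : 3.141592 < p) (h2 : p < 3.141593) (n : ℕ) :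
    9 * p ^ (2*n+4) / ((2*n+4)! : ℝ) + (4 + 18*p - 9*p^2/2) * p ^ (2*n+2) / ((2*n+2)! : ℝ)
      ≤ 18 * p ^ (2*n+3) / ((2*n+3)! : ℝ) + 8 * p ^ (2*n+1) / ((2*n+1)! : ℝ) := by
  have hp : 0 < p := by linarith
  have hp2l : (9.8696 : ℝ) < p^2 := by nlinarith
  have hp2u : p^2 < 9.86961 := by nlinarith
  have hp3l : (31.00625 : ℝ) < p^3 := by nlinarith [mul_lt_mul'' hp2l h1 (by norm_num) (by norm_num)]
  have hp3u : p^3 < 31.0063 := by nlinarith [mul_lt_mul'' hp2u h2 (sq_nonneg p) hp.le]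
  match n with
  | 0 =>
    norm_num [Nat.factorial]
    have hp4l : (97.409 : ℝ) < p^4 := by nlinarith [mul_lt_mul'' hp2l hp2l (by norm_num) (by norm_num)]
    nlinarith [hp2u, hp3u, hp4l, h1]
  | 1 =>
    have hp4u : p^4 < 97.40915 := by nlinarith [mul_lt_mul'' hp2u hp2u (sq_nonneg p) (sq_nonneg p)]
    have hp5u : p^5 < 306.0199 := by nlinarith [mul_lt_mul'' hp4u h2 (by positivity : (0:ℝ) ≤ p^4) hp.le]
    have hp4l : (97.409 : ℝ) < p^4 := by nlinarith [mul_lt_mul'' hp2l hp2l (by norm_num) (by norm_num)]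
    have hp6l : (961.3879 : ℝ) < p^6 := by nlinarith [mul_lt_mul'' hp4l hp2l (by norm_num) (by norm_num)]
    norm_num [Nat.factorial]
    nlinarith [hp3l, hp4u, hp5u, hp6l]
  | 2 =>
    have hp4l : (97.409 : ℝ) < p^4 := by nlinarith [mul_lt_mul'' hp2l hp2l (by norm_num) (by norm_num)]
    have hp4u : p^4 < 97.40915 := by nlinarith [mul_lt_mul'' hp2u hp2u (sq_nonneg p) (sq_nonneg p)]
    have hp5l : (306.0193 : ℝ) < p^5 := by nlinarith [mul_lt_mul'' hp4l h1 (by norm_num) (by norm_num)]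
    have hp6u : p^6 < 961.39 := by nlinarith [mul_lt_mul'' hp4u hp2u (by positivity : (0:ℝ) ≤ p^4) (sq_nonneg p)]
    have hp7u : p^7 < 3020.296 := by nlinarith [mul_lt_mul'' hp6u h2 (by positivity : (0:ℝ) ≤ p^6) hp.le]
    have hp7l : (3020.288 : ℝ) < p^7 := by nlinarith [mul_lt_mul'' hp5l hp2l (by norm_num) (by norm_num)]
    have hp8l : (9488.515 : ℝ) < p^8 := by nlinarith [mul_lt_mul'' hp7l h1 (by norm_num) (by norm_num)]
    norm_num [Nat.factorial]
    nlinarith [hp5l, hp6u, hp7u, hp8l]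
  | (m+3) =>
    have hm : (0:ℝ) ≤ (m : ℝ) := Nat.cast_nonneg m
    have e1 : 2*(m+3)+4 = (2*m+9)+1 := by omega
    have e2 : 2*(m+3)+3 = 2*m+9 := by omega
    have e3 : 2*(m+3)+2 = (2*m+7)+1 := by omega
    have e4 : 2*(m+3)+1 = 2*m+7 := by omega
    rw [e1, e2, e3, e4]
    have hA : 9 * p ^ ((2*m+9) + 1) / (((2*m+9) + 1)! : ℝ) ≤ 18 * p ^ (2*m+9) / ((2*m+9)! : ℝ) := by
      refine hyp_step p hp 9 18 (2*m+9) ?_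
      push_cast
      nlinarith
    have hB : (4 + 18*p - 9*p^2/2) * p ^ ((2*m+7) + 1) / (((2*m+7) + 1)! : ℝ)
        ≤ 8 * p ^ (2*m+7) / ((2*m+7)! : ℝ) := by
      refine hyp_step p hp _ 8 (2*m+7) ?_
      push_cast
      nlinarith [hp2u, hp3l]
    linarith

/-- For every τ ∈ ℝ one has
(9+4τ²)(1 + 2τ sinh(πτ)) − (9 + (4+18π−9π²/2)τ²) cosh(πτ) ≥ 0; equivalently
(9+4τ²)(sech(πτ) + 2τ tanh(πτ)) ≥ 9 + (4+18π−9π²/2)τ². -/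
theorem hyperbolic_ineq (τ : ℝ) :
    0 ≤ (9 + 4 * τ ^ 2) * (1 + 2 * τ * Real.sinh (Real.pi * τ))
        - (9 + (4 + 18 * Real.pi - 9 * Real.pi ^ 2 / 2) * τ ^ 2) * Real.cosh (Real.pi * τ) ∧
    9 + (4 + 18 * Real.pi - 9 * Real.pi ^ 2 / 2) * τ ^ 2
      ≤ (9 + 4 * τ ^ 2) * (1 / Real.cosh (Real.pi * τ) + 2 * τ * Real.tanh (Real.pi * τ)) := by
  have h1 := Real.pi_gt_d6
  have h2 := Real.pi_lt_d6
  set p := Real.pi with hpdef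
  set x := p * τ with hxd
  have hS := Real.hasSum_sinh x
  have hC := Real.hasSum_cosh x
  have hS1 : HasSum (fun n : ℕ => x ^ (2*(n+1)+1) / ((2*(n+1)+1)! : ℝ)) (Real.sinh x - x) := by
    have := (hasSum_nat_add_iff' (f := fun n : ℕ => x ^ (2*n+1) / ((2*n+1)! : ℝ)) 1).2 hS
    simpa [Nat.factorial] using this
  have hC1 : HasSum (fun n : ℕ => x ^ (2*(n+1)) / ((2*(n+1))! : ℝ)) (Real.cosh x - 1) := by
    have := (hasSum_nat_add_iff' (f := fun n : ℕ => x ^ (2*n) / ((2*n)! : ℝ)) 1).2 hC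
    simpa [Nat.factorial] using this
  have hC2 : HasSum (fun n : ℕ => x ^ (2*(n+2)) / ((2*(n+2))! : ℝ)) (Real.cosh x - (1 + x^2/2)) := by
    have := (hasSum_nat_add_iff' (f := fun n : ℕ => x ^ (2*n) / ((2*n)! : ℝ)) 2).2 hC
    simpa [Finset.sum_range_succ, Nat.factorial] using this
  have hBig := ((hS1.mul_left (18*τ)).add (hS.mul_left (8*τ^3))).sub
      ((hC2.mul_left 9).add (hC1.mul_left ((4 + 18*p - 9*p^2/2)*τ^2)))
  have hterm : ∀ n : ℕ,
      0 ≤ 18*τ * (x ^ (2*(n+1)+1) / ((2*(n+1)+1)! : ℝ)) + 8*τ^3 * (x ^ (2*n+1) / ((2*n+1)! : ℝ))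
        - (9 * (x ^ (2*(n+2)) / ((2*(n+2))! : ℝ))
            + (4 + 18*p - 9*p^2/2)*τ^2 * (x ^ (2*(n+1)) / ((2*(n+1))! : ℝ))) := by
    intro n
    have hcoef := hyp_coef p h1 h2 n
    have ht : (0:ℝ) ≤ (τ^2)^(n+2) := by positivity
    have hmul := mul_le_mul_of_nonneg_right hcoef ht
    have e1 : 2*(n+1)+1 = 2*n+3 := by omega
    have e2 : 2*(n+2) = 2*n+4 := by omega
    have e3 : 2*(n+1) = 2*n+2 := by omega
    rw [e1, e2, e3, hxd]
    have heq1 : 18*τ * ((p*τ) ^ (2*n+3) / ((2*n+3)! : ℝ))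
        = (18 * p ^ (2*n+3) / ((2*n+3)! : ℝ)) * (τ^2)^(n+2) := by
      rw [mul_pow]; ring
    have heq2 : 8*τ^3 * ((p*τ) ^ (2*n+1) / ((2*n+1)! : ℝ))
        = (8 * p ^ (2*n+1) / ((2*n+1)! : ℝ)) * (τ^2)^(n+2) := by
      rw [mul_pow]; ring
    have heq3 : 9 * ((p*τ) ^ (2*n+4) / ((2*n+4)! : ℝ))
        = (9 * p ^ (2*n+4) / ((2*n+4)! : ℝ)) * (τ^2)^(n+2) := by
      rw [mul_pow]; ring
    have heq4 : (4 + 18*p - 9*p^2/2)*τ^2 * ((p*τ) ^ (2*n+2) / ((2*n+2)! : ℝ))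
        = ((4 + 18*p - 9*p^2/2) * p ^ (2*n+2) / ((2*n+2)! : ℝ)) * (τ^2)^(n+2) := by
      rw [mul_pow]; ring
    rw [heq1, heq2, heq3, heq4]
    linarith
  have h0 := hBig.nonneg hterm
  have key : 0 ≤ (9 + 4 * τ ^ 2) * (1 + 2 * τ * Real.sinh x)
      - (9 + (4 + 18 * p - 9 * p ^ 2 / 2) * τ ^ 2) * Real.cosh x := by
    have hTS : (9 + 4 * τ ^ 2) * (1 + 2 * τ * Real.sinh x)
        - (9 + (4 + 18 * p - 9 * p ^ 2 / 2) * τ ^ 2) * Real.cosh x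
        = 18*τ*(Real.sinh x - x) + 8*τ^3*(Real.sinh x)
          - (9*(Real.cosh x - (1 + x^2/2)) + (4 + 18*p - 9*p^2/2)*τ^2*(Real.cosh x - 1)) := by
      rw [hxd]; ring
    rw [hTS]
    exact h0
  constructor
  · exact key
  · have hcp := Real.cosh_pos x
    rw [Real.tanh_eq_sinh_div_cosh]
    rw [← sub_nonneg]
    have hdiv : (9 + 4 * τ ^ 2) * (1 / Real.cosh x + 2 * τ * (Real.sinh x / Real.cosh x))
        - (9 + (4 + 18 * p - 9 * p ^ 2 / 2) * τ ^ 2)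
        = ((9 + 4 * τ ^ 2) * (1 + 2 * τ * Real.sinh x)
          - (9 + (4 + 18 * p - 9 * p ^ 2 / 2) * τ ^ 2) * Real.cosh x) / Real.cosh x := by
      field_simp
    rw [hdiv]
    exact div_nonneg key hcp.le
end

section
/- For every ν ∈ (0,1), with Υ_ν := √(1−ν²), one has (π·Υ_ν − sin(π·Υ_ν))/(Υ_ν·sin²(π·Υ_ν/2)) > 2. -/
open Real

private lemma key_ineq (x : ℝ) (hx0 : 0 < x) (hxpi : x < Real.pi) :
    x * (1 - Real.cos x) < Real.pi * (x - Real.sin x) := by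
  set g : ℝ → ℝ := fun y => Real.pi * (y - Real.sin y) - y * (1 - Real.cos y) with hg
  have hcont : ContinuousOn g (Set.Icc 0 Real.pi) := by fun_prop
  have hderiv : ∀ y ∈ Set.Ioo (0:ℝ) Real.pi, 0 < deriv g y := by
    intro y hy
    obtain ⟨hy0, hypi⟩ := hy
    have h1 : HasDerivAt g (Real.pi * (1 - Real.cos y)
        - (1 * (1 - Real.cos y) + y * (0 - (-Real.sin y)))) y := by
      exact (((hasDerivAt_id y).sub (Real.hasDerivAt_sin y)).const_mul Real.pi).sub
        ((hasDerivAt_id y).mul ((hasDerivAt_const y 1).sub (Real.hasDerivAt_cos y)))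
    rw [h1.deriv]
    have hcos : Real.cos y = 1 - 2 * Real.sin (y/2) ^ 2 := by
      have h := Real.cos_two_mul (y/2)
      rw [show 2*(y/2) = y by ring] at h
      rw [h, Real.cos_sq']; ring
    have hsin : Real.sin y = 2 * Real.sin (y/2) * Real.cos (y/2) := by
      have h := Real.sin_two_mul (y/2)
      rw [show 2*(y/2) = y by ring] at h
      rw [h]
    have hs0 : 0 < Real.sin (y/2) :=
      Real.sin_pos_of_pos_of_lt_pi (by linarith) (by linarith [Real.pi_pos])
    have hc0 : 0 < Real.cos (y/2) :=
      Real.cos_pos_of_mem_Ioo ⟨by linarith [Real.pi_pos], by linarith⟩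
    have htan : y/2 < Real.tan (y/2) := Real.lt_tan (by linarith) (by linarith)
    rw [Real.tan_eq_sin_div_cos, lt_div_iff₀ hc0] at htan
    have hpi3 : (3:ℝ) < Real.pi := Real.pi_gt_three
    rw [hcos, hsin]
    nlinarith [mul_pos hs0 hc0, sq_nonneg (Real.sin (y/2))]
  have hmono : StrictMonoOn g (Set.Icc 0 Real.pi) := by
    apply strictMonoOn_of_deriv_pos (convex_Icc _ _) hcont
    rwa [interior_Icc]
  have h0 : g 0 = 0 := by simp [hg]
  have hlt : g 0 < g x := hmono ⟨le_refl 0, Real.pi_pos.le⟩ ⟨hx0.le, hxpi.le⟩ hx0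
  rw [h0] at hlt
  simp only [hg] at hlt
  linarith

/-- Υ_ν := √(1 − ν²). -/
noncomputable def Ups (ν : ℝ) : ℝ := Real.sqrt (1 - ν ^ 2)

/-- For every ν ∈ (0,1): (πΥ_ν − sin(πΥ_ν))/(Υ_ν sin²(πΥ_ν/2)) > 2. -/
theorem f2_gt_two (ν : ℝ) (hν : ν ∈ Set.Ioo (0 : ℝ) 1) :
    2 < (Real.pi * Ups ν - Real.sin (Real.pi * Ups ν))
        / (Ups ν * Real.sin (Real.pi * Ups ν / 2) ^ 2) := by
  obtain ⟨hν0, hν1⟩ := hν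
  set u := Ups ν with hu
  have hsq : 0 < 1 - ν ^ 2 := by nlinarith
  have hu0 : 0 < u := Real.sqrt_pos.mpr hsq
  have hu1 : u < 1 := by
    rw [hu, Ups, Real.sqrt_lt' one_pos]
    nlinarith
  have hπ : 0 < Real.pi := Real.pi_pos
  have hx0 : 0 < Real.pi * u := by positivity
  have hxpi : Real.pi * u < Real.pi := by nlinarith
  have hkey := key_ineq (Real.pi * u) hx0 hxpi
  have hcos : Real.cos (Real.pi * u) = 1 - 2 * Real.sin (Real.pi * u / 2) ^ 2 := by
    have h := Real.cos_two_mul (Real.pi * u / 2)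
    rw [show 2*(Real.pi * u/2) = Real.pi * u by ring] at h
    rw [h, Real.cos_sq']; ring
  have hs0 : 0 < Real.sin (Real.pi * u / 2) :=
    Real.sin_pos_of_pos_of_lt_pi (by linarith) (by nlinarith)
  have hD : 0 < u * Real.sin (Real.pi * u / 2) ^ 2 := by positivity
  rw [lt_div_iff₀ hD]
  rw [hcos] at hkey
  nlinarith [sq_nonneg (Real.sin (Real.pi * u / 2))]
end
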